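/- If Γ = (G, σ) is odd-exchangeable, then the spectrum of Γ is symmetric with respect to the origin. -/

import Mathlib

open scoped Classical
open Polynomial

structure SignedGraph (V : Type*) where
  G : SimpleGraph V
  sgn : V → V → ℤ
  symm : ∀ u v, sgn u v = sgn v u
  pm : ∀ u v, G.Adj u v → sgn u v = 1 ∨ sgn u v = -1
  zero : ∀ u v, ¬ G.Adj u v → sgn u v = 0

namespace SignedGraph

variable {V : Type*}

/-- The (real) adjacency matrix of a signed graph. -/
noncomputable def adjMatrix [Fintype V] (Γ : SignedGraph V) : Matrix V V ℝ :=
  fun u v => (Γ.sgn u v : ℝ)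

/-- Switching with respect to a vertex subset `U`. -/
noncomputable def switch (Γ : SignedGraph V) (U : Set V) : SignedGraph V where
  G := Γ.G
  sgn u v := if ((u ∈ U) ↔ (v ∈ U)) then Γ.sgn u v else -Γ.sgn u v
  symm u v := by
    try dsimp only
    by_cases h : (u ∈ U) ↔ (v ∈ U)
    · rw [if_pos h, if_pos (Iff.symm h), Γ.symm u v]
    · rw [if_neg h, if_neg (fun hh => h (Iff.symm hh)), Γ.symm u v]
  pm u v hadj := by
    by_cases h : (u ∈ U) ↔ (v ∈ U)
    · simpa [h] using Γ.pm u v hadj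
    · rcases Γ.pm u v hadj with h1 | h1 <;> simp [h, h1]
  zero u v hadj := by
    by_cases h : (u ∈ U) ↔ (v ∈ U) <;> simp [h, Γ.zero u v hadj]

/-- The sign function on unordered pairs. -/
def sgnE (Γ : SignedGraph V) : Sym2 V → ℤ := Sym2.lift ⟨Γ.sgn, Γ.symm⟩

/-- The spectrum of `Γ` is symmetric with respect to the origin. -/
def SymmetricSpectrum [Fintype V] [DecidableEq V] (Γ : SignedGraph V) : Prop :=
  ∀ x : ℝ, Γ.adjMatrix.charpoly.rootMultiplicity x =
    Γ.adjMatrix.charpoly.rootMultiplicity (-x)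

/-- `B` is a (nonempty) 2-regular subgraph of `G`: a disjoint union of cycles. -/
def IsTwoRegular (Γ : SignedGraph V) (B : Γ.G.Subgraph) : Prop :=
  B.verts.Nonempty ∧ ∀ v ∈ B.verts, (B.neighborSet v).ncard = 2

/-- The product of the signs of all edges of a subgraph. -/
noncomputable def sgnProd (Γ : SignedGraph V) (B : Γ.G.Subgraph) : ℤ :=
  ∏ᶠ e ∈ B.edgeSet, Γ.sgnE e

/-- The number of connected components of a subgraph. -/
noncomputable def ncomp (Γ : SignedGraph V) (B : Γ.G.Subgraph) : ℕ :=
  Nat.card B.coe.ConnectedComponent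

/-- `Γ` is odd-exchangeable: some automorphism of `G` maps the set of positive odd
2-regular subgraphs onto the set of negative odd 2-regular subgraphs. -/
def OddExchangeable [Fintype V] (Γ : SignedGraph V) : Prop :=
  ∃ φ : Γ.G ≃g Γ.G,
    (fun B : Γ.G.Subgraph => B.map φ.toHom) ''
        {B | Γ.IsTwoRegular B ∧ Odd B.verts.ncard ∧ Γ.sgnProd B = 1} =
      {B | Γ.IsTwoRegular B ∧ Odd B.verts.ncard ∧ Γ.sgnProd B = -1}

/-! ### Auxiliary machinery for the proof -/

/-- `v` lies on an orbit of `π` of length at least 3. -/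
def LongPt (π : Equiv.Perm V) (v : V) : Prop := π v ≠ v ∧ π (π v) ≠ v

lemma longPt_apply {π : Equiv.Perm V} {v : V} (hv : LongPt π v) : LongPt π (π v) :=
  ⟨fun h => hv.1 (π.injective h), fun h => hv.2 (π.injective h)⟩

lemma longPt_inv {π : Equiv.Perm V} {v : V} (hv : LongPt π v) : LongPt π (π⁻¹ v) := by
  have h1 : π (π⁻¹ v) = v := π.apply_symm_apply v
  constructor
  · rw [h1]
    intro h
    have h2 := congrArg π h
    rw [h1] at h2
    exact hv.1 h2
  · rw [h1]
    intro h
    exact hv.2 (by rw [h, h1])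

lemma longPt_ne_inv {π : Equiv.Perm V} {v : V} (hv : LongPt π v) : π v ≠ π⁻¹ v :=
  fun h => hv.2 (by rw [h]; exact π.apply_symm_apply v)

/-- All moved points of `π` are moved along edges of `Γ`. -/
def GoodP (Γ : SignedGraph V) (π : Equiv.Perm V) : Prop :=
  ∀ i, π i ≠ i → Γ.G.Adj i (π i)

/-- The 2-regular subgraph associated to the long orbits of a permutation. -/
def permSub (Γ : SignedGraph V) (π : Equiv.Perm V) : Γ.G.Subgraph where
  verts := {v | LongPt π v}
  Adj u v := Γ.G.Adj u v ∧ (π u = v ∨ π v = u) ∧ LongPt π u ∧ LongPt π v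
  adj_sub h := h.1
  edge_vert h := h.2.2.1
  symm := by
    constructor
    rintro u v ⟨h1, h2, h3, h4⟩
    exact ⟨h1.symm, h2.symm, h4, h3⟩

lemma permSub_verts (Γ : SignedGraph V) (π : Equiv.Perm V) :
    (permSub Γ π).verts = {v | LongPt π v} := rfl

lemma permSub_adj (Γ : SignedGraph V) (π : Equiv.Perm V) (u v : V) :
    (permSub Γ π).Adj u v ↔
      Γ.G.Adj u v ∧ (π u = v ∨ π v = u) ∧ LongPt π u ∧ LongPt π v := Iff.rfl

section FintypeAux

variable [Fintype V] [DecidableEq V]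

/-- The points on long orbits, as a finset. -/
noncomputable def longF (π : Equiv.Perm V) : Finset V :=
  Finset.univ.filter (fun v => LongPt π v)

/-- The points on 2-element orbits, as a finset. -/
noncomputable def twoF (π : Equiv.Perm V) : Finset V :=
  Finset.univ.filter (fun v => π v ≠ v ∧ π (π v) = v)

lemma mem_longF {π : Equiv.Perm V} {v : V} : v ∈ longF π ↔ LongPt π v := by
  simp [longF]

lemma mem_twoF {π : Equiv.Perm V} {v : V} : v ∈ twoF π ↔ π v ≠ v ∧ π (π v) = v := by
  simp [twoF]

lemma twoF_apply_mem {π : Equiv.Perm V} {a : V} (ha : a ∈ twoF π) : π a ∈ twoF π := by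
  rw [mem_twoF] at ha ⊢
  refine ⟨?_, ?_⟩
  · rw [ha.2]; exact fun hh => ha.1 hh.symm
  · rw [ha.2]

lemma even_card_twoF (π : Equiv.Perm V) : Even (twoF π).card := by
  have h : ∏ _v ∈ twoF π, (-1 : ℤ) = 1 := by
    refine Finset.prod_involution (fun a _ => π a) (fun a _ => by norm_num)
      (fun a ha _ => (mem_twoF.mp ha).1) (fun a ha => twoF_apply_mem ha)
      (fun a ha => (mem_twoF.mp ha).2)
  rw [Finset.prod_const] at h
  exact (neg_one_pow_eq_one_iff_even (by norm_num : (-1 : ℤ) ≠ 1)).mp h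

lemma support_eq_union (π : Equiv.Perm V) : π.support = twoF π ∪ longF π := by
  ext v
  simp only [Equiv.Perm.mem_support, Finset.mem_union, mem_twoF, mem_longF, LongPt]
  tauto

lemma disj_twoF_longF (π : Equiv.Perm V) : Disjoint (twoF π) (longF π) := by
  rw [Finset.disjoint_left]
  intro a ha hb
  exact (mem_longF.mp hb).2 (mem_twoF.mp ha).2

lemma odd_longF_card {π : Equiv.Perm V} (hodd : Odd π.support.card) :
    Odd (longF π).card := by
  have h1 : π.support.card = (twoF π).card + (longF π).card := by
    rw [support_eq_union, Finset.card_union_of_disjoint (disj_twoF_longF π)]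
  obtain ⟨a, ha⟩ := even_card_twoF π
  obtain ⟨b, hb⟩ := hodd
  exact ⟨b - a, by omega⟩

lemma neighborSet_permSub (Γ : SignedGraph V) {π : Equiv.Perm V} (hg : Γ.GoodP π) {v : V}
    (hv : LongPt π v) : (permSub Γ π).neighborSet v = {π v, π⁻¹ v} := by
  ext w
  simp only [SimpleGraph.Subgraph.mem_neighborSet, permSub_adj, Set.mem_insert_iff,
    Set.mem_singleton_iff]
  constructor
  · rintro ⟨-, h2 | h2, -, -⟩
    · exact Or.inl h2.symm
    · exact Or.inr (by rw [← h2]; exact (π.symm_apply_apply w).symm)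
  · rintro (rfl | rfl)
    · exact ⟨hg v hv.1, Or.inl rfl, hv, longPt_apply hv⟩
    · have h3 := hg (π⁻¹ v) (longPt_inv hv).1
      rw [show π (π⁻¹ v) = v from π.apply_symm_apply v] at h3
      exact ⟨h3.symm, Or.inr (π.apply_symm_apply v), hv, longPt_inv hv⟩

lemma isTwoRegular_permSub (Γ : SignedGraph V) {π : Equiv.Perm V} (hg : Γ.GoodP π)
    (hodd : Odd π.support.card) :
    Γ.IsTwoRegular (permSub Γ π) ∧ Odd (permSub Γ π).verts.ncard := by
  have hoddl := odd_longF_card (π := π) hodd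
  have hvs : (permSub Γ π).verts = ↑(longF π) := by
    ext v; simp [permSub_verts, mem_longF]
  have hncard : (permSub Γ π).verts.ncard = (longF π).card := by
    rw [hvs, Set.ncard_coe_finset]
  refine ⟨⟨?_, ?_⟩, hncard ▸ hoddl⟩
  · rw [hvs]
    exact Finset.coe_nonempty.mpr (Finset.card_pos.mp hoddl.pos)
  · intro v hv
    have hv' : LongPt π v := hv
    rw [neighborSet_permSub Γ hg hv']
    exact Set.ncard_pair (longPt_ne_inv hv')

lemma edgeSet_permSub (Γ : SignedGraph V) (π : Equiv.Perm V) (hg : Γ.GoodP π) :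
    (permSub Γ π).edgeSet = (fun i => s(i, π i)) '' {v | LongPt π v} := by
  ext e
  induction e using Sym2.ind with
  | _ u v =>
    simp only [SimpleGraph.Subgraph.mem_edgeSet, Set.mem_image, Set.mem_setOf_eq, permSub_adj]
    constructor
    · rintro ⟨hadj, h2 | h2, hu, hv⟩
      · exact ⟨u, hu, by rw [h2]⟩
      · exact ⟨v, hv, by rw [h2, Sym2.eq_swap]⟩
    · rintro ⟨i, hi, heq⟩
      rw [Sym2.eq_iff] at heq
      rcases heq with ⟨rfl, rfl⟩ | ⟨rfl, rfl⟩
      · exact ⟨hg i hi.1, Or.inl rfl, hi, longPt_apply hi⟩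
      · exact ⟨(hg i hi.1).symm, Or.inr rfl, longPt_apply hi, hi⟩

lemma injOn_longSet (π : Equiv.Perm V) :
    Set.InjOn (fun i => s(i, π i)) {v | LongPt π v} := by
  intro i _ j hj hij
  simp only [Sym2.eq_iff] at hij
  rcases hij with ⟨h1, _⟩ | ⟨h1, h2⟩
  · exact h1
  · exact absurd (by rw [← h1, h2] : π (π j) = j) hj.2

lemma sgnProd_permSub (Γ : SignedGraph V) (π : Equiv.Perm V) (hg : Γ.GoodP π) :
    Γ.sgnProd (permSub Γ π) = ∏ i ∈ longF π, Γ.sgn i (π i) := by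
  rw [sgnProd, edgeSet_permSub Γ π hg, finprod_mem_image (injOn_longSet π)]
  have hset : {v | LongPt π v} = ↑(longF π) := by ext v; simp [mem_longF]
  rw [hset, finprod_mem_coe_finset]
  refine Finset.prod_congr rfl fun i _ => ?_
  simp [sgnE]

lemma sgnProd_permSub_eq_one_or (Γ : SignedGraph V) (π : Equiv.Perm V) (hg : Γ.GoodP π) :
    Γ.sgnProd (permSub Γ π) = 1 ∨ Γ.sgnProd (permSub Γ π) = -1 := by
  rw [sgnProd_permSub Γ π hg]
  have hsq : (∏ i ∈ longF π, Γ.sgn i (π i)) * (∏ i ∈ longF π, Γ.sgn i (π i)) = 1 := by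
    rw [← Finset.prod_mul_distrib]
    apply Finset.prod_eq_one
    intro i hi
    rcases Γ.pm i (π i) (hg i (mem_longF.mp hi).1) with h | h <;> rw [h] <;> norm_num
  exact Int.isUnit_iff.mp (IsUnit.of_mul_eq_one _ hsq)

lemma prod_support_adj (Γ : SignedGraph V) (π : Equiv.Perm V) (hg : Γ.GoodP π) :
    ∏ i ∈ π.support, Γ.adjMatrix (π i) i = ((Γ.sgnProd (permSub Γ π) : ℤ) : ℝ) := by
  rw [support_eq_union, Finset.prod_union (disj_twoF_longF π)]
  have h2 : ∏ i ∈ twoF π, Γ.adjMatrix (π i) i = 1 := by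
    refine Finset.prod_involution (fun a _ => π a) ?_ (fun a ha _ => (mem_twoF.mp ha).1)
      (fun a ha => twoF_apply_mem ha) (fun a ha => (mem_twoF.mp ha).2)
    intro a ha
    have ha' := mem_twoF.mp ha
    rw [ha'.2]
    have e1 : Γ.adjMatrix (π a) a = ((Γ.sgn a (π a) : ℤ) : ℝ) := by
      show ((Γ.sgn (π a) a : ℤ) : ℝ) = _
      rw [Γ.symm]
    have e2 : Γ.adjMatrix a (π a) = ((Γ.sgn a (π a) : ℤ) : ℝ) := rfl
    rw [e1, e2]
    rcases Γ.pm a (π a) (hg a ha'.1) with h | h <;> rw [h] <;> norm_num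
  have h3 : ∏ i ∈ longF π, Γ.adjMatrix (π i) i
      = ((∏ i ∈ longF π, Γ.sgn i (π i) : ℤ) : ℝ) := by
    push_cast
    refine Finset.prod_congr rfl fun i _ => ?_
    show ((Γ.sgn (π i) i : ℤ) : ℝ) = _
    rw [Γ.symm]
  rw [h2, h3, one_mul, sgnProd_permSub Γ π hg]

lemma sign_conj' (σ π : Equiv.Perm V) :
    Equiv.Perm.sign (σ * π * σ⁻¹) = Equiv.Perm.sign π := by
  rw [Equiv.Perm.sign_mul, Equiv.Perm.sign_mul, Equiv.Perm.sign_inv,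
    mul_comm (Equiv.Perm.sign σ) (Equiv.Perm.sign π), mul_assoc, Int.units_mul_self, mul_one]

end FintypeAux

lemma goodP_conj_iff (Γ : SignedGraph V) (φ : Γ.G ≃g Γ.G) (π : Equiv.Perm V) :
    Γ.GoodP (φ.toEquiv * π * φ.toEquiv⁻¹) ↔ Γ.GoodP π := by
  set σ : Equiv.Perm V := φ.toEquiv with hσ
  have happ : ∀ i, (σ * π * σ⁻¹) (σ i) = σ (π i) := by
    intro i
    simp [Equiv.Perm.mul_apply]
  have hAdj : ∀ a b : V, Γ.G.Adj (σ a) (σ b) ↔ Γ.G.Adj a b := fun a b => φ.map_adj_iff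
  constructor
  · intro hgc i hi
    have h1 : (σ * π * σ⁻¹) (σ i) ≠ σ i := by
      rw [happ i]
      exact fun hh => hi (σ.injective hh)
    have := hgc (σ i) h1
    rw [happ i] at this
    exact (hAdj i (π i)).mp this
  · intro hgp j hj
    obtain ⟨i, rfl⟩ := σ.surjective j
    have h1 : π i ≠ i := by
      intro hh
      apply hj
      rw [happ i, hh]
    have := hgp i h1
    rw [happ i]
    exact (hAdj i (π i)).mpr this

lemma permSub_conj (Γ : SignedGraph V) (φ : Γ.G ≃g Γ.G) (π : Equiv.Perm V) :
    permSub Γ (φ.toEquiv * π * φ.toEquiv⁻¹) = (permSub Γ π).map φ.toHom := by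
  set σ : Equiv.Perm V := φ.toEquiv with hσ
  have happ : ∀ i, (σ * π * σ⁻¹) (σ i) = σ (π i) := by
    intro i
    simp [Equiv.Perm.mul_apply]
  have hAdj : ∀ a b : V, Γ.G.Adj (σ a) (σ b) ↔ Γ.G.Adj a b := fun a b => φ.map_adj_iff
  have hlong : ∀ v, LongPt (σ * π * σ⁻¹) (σ v) ↔ LongPt π v := by
    intro v
    unfold LongPt
    rw [happ v, happ (π v)]
    simp [σ.injective.ne_iff]
  refine SimpleGraph.Subgraph.ext ?_ ?_
  · ext w
    obtain ⟨a, rfl⟩ := σ.surjective w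
    simp only [permSub_verts, SimpleGraph.Subgraph.map_verts, Set.mem_image, Set.mem_setOf_eq]
    constructor
    · intro hw
      exact ⟨a, (hlong a).mp hw, rfl⟩
    · rintro ⟨x, hx, hxa⟩
      have hx' : x = a := σ.injective hxa
      subst hx'
      exact (hlong x).mpr hx
  · ext u w
    obtain ⟨a, rfl⟩ := σ.surjective u
    obtain ⟨b, rfl⟩ := σ.surjective w
    simp only [permSub_adj, SimpleGraph.Subgraph.map_adj, Relation.Map]
    constructor
    · rintro ⟨h1, h2, h3, h4⟩
      refine ⟨a, b, ⟨(hAdj a b).mp h1, ?_, (hlong a).mp h3, (hlong b).mp h4⟩, rfl, rfl⟩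
      rcases h2 with h2 | h2
      · left
        rw [happ a] at h2
        exact σ.injective h2
      · right
        rw [happ b] at h2
        exact σ.injective h2
    · rintro ⟨x, y, ⟨h1, h2, h3, h4⟩, hx, hy⟩
      have hx' : x = a := σ.injective hx
      have hy' : y = b := σ.injective hy
      subst hx'; subst hy'
      refine ⟨(hAdj x y).mpr h1, ?_, (hlong x).mpr h3, (hlong y).mpr h4⟩
      rcases h2 with h2 | h2
      · left; rw [happ x, h2]
      · right; rw [happ y, h2]

lemma subgraph_map_inj {Γ : SignedGraph V} (φ : Γ.G ≃g Γ.G) {B B' : Γ.G.Subgraph}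
    (h : B.map φ.toHom = B'.map φ.toHom) : B = B' := by
  have hid : φ.symm.toHom.comp φ.toHom = SimpleGraph.Hom.id := by
    apply DFunLike.ext
    intro v
    exact φ.symm_apply_apply v
  have hcomp : ∀ C : Γ.G.Subgraph, (C.map φ.toHom).map φ.symm.toHom = C := by
    intro C
    rw [← SimpleGraph.Subgraph.map_comp, hid, SimpleGraph.Subgraph.map_id]
  have := congrArg (SimpleGraph.Subgraph.map φ.symm.toHom) h
  rwa [hcomp, hcomp] at this

section MainSum

variable [Fintype V] [DecidableEq V]

/-- The summand in the permutation expansion of the determinant. -/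
noncomputable def tf (Γ : SignedGraph V) (x : ℝ) (π : Equiv.Perm V) : ℝ :=
  ((Equiv.Perm.sign π : ℤ) : ℝ) * x ^ π.supportᶜ.card * ∏ i ∈ π.support, Γ.adjMatrix (π i) i

/-- The sign-and-power part of the summand. -/
noncomputable def sf (x : ℝ) (π : Equiv.Perm V) : ℝ :=
  ((Equiv.Perm.sign π : ℤ) : ℝ) * x ^ π.supportᶜ.card

lemma sf_conj (σ π : Equiv.Perm V) (x : ℝ) : sf x (σ * π * σ⁻¹) = sf x π := by
  unfold sf
  rw [sign_conj', Finset.card_compl, Finset.card_compl, Equiv.Perm.card_support_conj]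

lemma sum_odd_zero (Γ : SignedGraph V) (φ : Γ.G ≃g Γ.G)
    (hφ : (fun B : Γ.G.Subgraph => B.map φ.toHom) ''
        {B | Γ.IsTwoRegular B ∧ Odd B.verts.ncard ∧ Γ.sgnProd B = 1} =
      {B | Γ.IsTwoRegular B ∧ Odd B.verts.ncard ∧ Γ.sgnProd B = -1}) (x : ℝ) :
    ∑ π ∈ Finset.univ.filter (fun π : Equiv.Perm V => Odd π.support.card), tf Γ x π = 0 := by
  classical
  set σ : Equiv.Perm V := φ.toEquiv with hσ
  set oddF : Finset (Equiv.Perm V) :=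
    Finset.univ.filter (fun π : Equiv.Perm V => Odd π.support.card) with hoddF
  rw [← Finset.sum_filter_add_sum_filter_not oddF (fun π => Γ.GoodP π)]
  have hbad : ∑ π ∈ oddF.filter (fun π => ¬ Γ.GoodP π), tf Γ x π = 0 := by
    apply Finset.sum_eq_zero
    intro π hπ
    obtain ⟨-, hng⟩ := Finset.mem_filter.mp hπ
    unfold GoodP at hng
    push_neg at hng
    obtain ⟨i, hi1, hi2⟩ := hng
    have hzero : Γ.adjMatrix (π i) i = 0 := by
      show ((Γ.sgn (π i) i : ℤ) : ℝ) = 0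
      rw [Γ.symm, Γ.zero i (π i) hi2, Int.cast_zero]
    have hprod : ∏ i ∈ π.support, Γ.adjMatrix (π i) i = 0 :=
      Finset.prod_eq_zero (Equiv.Perm.mem_support.mpr hi1) hzero
    unfold tf
    rw [hprod, mul_zero]
  rw [hbad, add_zero]
  set GO := oddF.filter (fun π => Γ.GoodP π) with hGO
  have hmemGO : ∀ π : Equiv.Perm V, π ∈ GO ↔ Odd π.support.card ∧ Γ.GoodP π := by
    intro π
    simp [hGO, hoddF, Finset.mem_filter]
  rw [← Finset.sum_filter_add_sum_filter_not GO (fun π => Γ.sgnProd (permSub Γ π) = 1)]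
  set Pos := GO.filter (fun π => Γ.sgnProd (permSub Γ π) = 1) with hPosDef
  set Neg := GO.filter (fun π => ¬ Γ.sgnProd (permSub Γ π) = 1) with hNegDef
  have hPos_eq : ∑ π ∈ Pos, tf Γ x π = ∑ π ∈ Pos, sf x π := by
    refine Finset.sum_congr rfl fun π hπ => ?_
    obtain ⟨hGOm, hsp⟩ := Finset.mem_filter.mp hπ
    obtain ⟨-, hgood⟩ := (hmemGO π).mp hGOm
    unfold tf sf
    rw [prod_support_adj Γ π hgood, hsp]
    norm_num
  have hNeg_eq : ∑ π ∈ Neg, tf Γ x π = - ∑ π ∈ Neg, sf x π := by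
    rw [← Finset.sum_neg_distrib]
    refine Finset.sum_congr rfl fun π hπ => ?_
    obtain ⟨hGOm, hsp⟩ := Finset.mem_filter.mp hπ
    obtain ⟨-, hgood⟩ := (hmemGO π).mp hGOm
    have hsp' : Γ.sgnProd (permSub Γ π) = -1 :=
      (sgnProd_permSub_eq_one_or Γ π hgood).resolve_left hsp
    unfold tf sf
    rw [prod_support_adj Γ π hgood, hsp']
    push_cast
    ring
  have hbij : ∑ π ∈ Pos, sf x π = ∑ π ∈ Neg, sf x π := by
    refine Finset.sum_nbij' (fun π => σ * π * σ⁻¹) (fun π => σ⁻¹ * π * σ) ?_ ?_ ?_ ?_ ?_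
    · -- Pos ↦ Neg
      intro π hπ
      obtain ⟨hGOm, hsp⟩ := Finset.mem_filter.mp hπ
      obtain ⟨hodd, hgood⟩ := (hmemGO π).mp hGOm
      have hodd' : Odd (σ * π * σ⁻¹).support.card := by
        rwa [Equiv.Perm.card_support_conj]
      have hgood' : Γ.GoodP (σ * π * σ⁻¹) := (goodP_conj_iff Γ φ π).mpr hgood
      have hBpos : permSub Γ π ∈
          {B : Γ.G.Subgraph | Γ.IsTwoRegular B ∧ Odd B.verts.ncard ∧ Γ.sgnProd B = 1} := by
        obtain ⟨h2reg, hoddv⟩ := isTwoRegular_permSub Γ hgood hodd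
        exact ⟨h2reg, hoddv, hsp⟩
      have hBneg := Set.mem_image_of_mem (fun B : Γ.G.Subgraph => B.map φ.toHom) hBpos
      rw [hφ] at hBneg
      have hBneg' : permSub Γ (σ * π * σ⁻¹) ∈
          {B : Γ.G.Subgraph | Γ.IsTwoRegular B ∧ Odd B.verts.ncard ∧ Γ.sgnProd B = -1} := by
        rw [permSub_conj Γ φ π]
        exact hBneg
      obtain ⟨-, -, hsp'⟩ := hBneg'
      refine Finset.mem_filter.mpr ⟨(hmemGO _).mpr ⟨hodd', hgood'⟩, ?_⟩
      rw [hsp']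
      decide
    · -- Neg ↦ Pos
      intro π' hπ'
      obtain ⟨hGOm, hns⟩ := Finset.mem_filter.mp hπ'
      obtain ⟨hodd, hgood⟩ := (hmemGO π').mp hGOm
      have hsp' : Γ.sgnProd (permSub Γ π') = -1 :=
        (sgnProd_permSub_eq_one_or Γ π' hgood).resolve_left hns
      have hBneg : permSub Γ π' ∈
          {B : Γ.G.Subgraph | Γ.IsTwoRegular B ∧ Odd B.verts.ncard ∧ Γ.sgnProd B = -1} := by
        obtain ⟨h2reg, hoddv⟩ := isTwoRegular_permSub Γ hgood hodd
        exact ⟨h2reg, hoddv, hsp'⟩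
      rw [← hφ] at hBneg
      obtain ⟨B₀, hB₀, hmap⟩ := hBneg
      have hconj : σ * (σ⁻¹ * π' * σ) * σ⁻¹ = π' := by group
      have hodd' : Odd (σ⁻¹ * π' * σ).support.card := by
        have h5 : σ⁻¹ * π' * σ = σ⁻¹ * π' * (σ⁻¹)⁻¹ := by rw [inv_inv]
        rw [h5, Equiv.Perm.card_support_conj]
        exact hodd
      have hgood' : Γ.GoodP (σ⁻¹ * π' * σ) := by
        have h6 := goodP_conj_iff Γ φ (σ⁻¹ * π' * σ)
        rw [show φ.toEquiv = σ from rfl, hconj] at h6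
        exact h6.mp hgood
      have heq : permSub Γ (σ⁻¹ * π' * σ) = B₀ := by
        apply subgraph_map_inj φ
        have h7 := permSub_conj Γ φ (σ⁻¹ * π' * σ)
        rw [show φ.toEquiv = σ from rfl, hconj] at h7
        have hmap' : B₀.map φ.toHom = permSub Γ π' := hmap
        rw [← h7, hmap']
      refine Finset.mem_filter.mpr ⟨(hmemGO _).mpr ⟨hodd', hgood'⟩, ?_⟩
      rw [heq]
      exact hB₀.2.2
    · intro π _; group
    · intro π _; group
    · intro π _
      exact (sf_conj σ π x).symm
  rw [hPos_eq, hNeg_eq, hbij]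
  ring

lemma det_add_eq_det_sub (Γ : SignedGraph V) (h : Γ.OddExchangeable) (x : ℝ) :
    (x • (1 : Matrix V V ℝ) + Γ.adjMatrix).det
      = (x • (1 : Matrix V V ℝ) - Γ.adjMatrix).det := by
  obtain ⟨φ, hφ⟩ := h
  have hdiag : ∀ i, Γ.adjMatrix i i = 0 := by
    intro i
    show ((Γ.sgn i i : ℤ) : ℝ) = 0
    rw [Γ.zero i i (Γ.G.loopless.irrefl i), Int.cast_zero]
  have hplus : ∀ π : Equiv.Perm V,
      ∏ i, (x • (1 : Matrix V V ℝ) + Γ.adjMatrix) (π i) i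
        = x ^ π.supportᶜ.card * ∏ i ∈ π.support, Γ.adjMatrix (π i) i := by
    intro π
    rw [← Finset.prod_compl_mul_prod π.support]
    congr 1
    · rw [show x ^ π.supportᶜ.card = ∏ _i ∈ π.supportᶜ, x from (Finset.prod_const x).symm]
      refine Finset.prod_congr rfl fun i hi => ?_
      have hfix : π i = i := by
        have := Finset.mem_compl.mp hi
        rwa [Equiv.Perm.notMem_support] at this
      rw [hfix]
      simp [Matrix.add_apply, Matrix.smul_apply, Matrix.one_apply_eq, hdiag i]
    · refine Finset.prod_congr rfl fun i hi => ?_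
      have hne : π i ≠ i := Equiv.Perm.mem_support.mp hi
      simp [Matrix.add_apply, Matrix.smul_apply, Matrix.one_apply_ne hne]
  have hminus : ∀ π : Equiv.Perm V,
      ∏ i, (x • (1 : Matrix V V ℝ) - Γ.adjMatrix) (π i) i
        = x ^ π.supportᶜ.card *
            ((-1 : ℝ) ^ π.support.card * ∏ i ∈ π.support, Γ.adjMatrix (π i) i) := by
    intro π
    rw [← Finset.prod_compl_mul_prod π.support]
    congr 1
    · rw [show x ^ π.supportᶜ.card = ∏ _i ∈ π.supportᶜ, x from (Finset.prod_const x).symm]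
      refine Finset.prod_congr rfl fun i hi => ?_
      have hfix : π i = i := by
        have := Finset.mem_compl.mp hi
        rwa [Equiv.Perm.notMem_support] at this
      rw [hfix]
      simp [Matrix.sub_apply, Matrix.smul_apply, Matrix.one_apply_eq, hdiag i]
    · have hterm : ∀ i ∈ π.support,
          (x • (1 : Matrix V V ℝ) - Γ.adjMatrix) (π i) i = -1 * Γ.adjMatrix (π i) i := by
        intro i hi
        have hne : π i ≠ i := Equiv.Perm.mem_support.mp hi
        simp [Matrix.sub_apply, Matrix.smul_apply, Matrix.one_apply_ne hne]
      rw [Finset.prod_congr rfl hterm, Finset.prod_mul_distrib, Finset.prod_const]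
  have e1 : (x • (1 : Matrix V V ℝ) + Γ.adjMatrix).det = ∑ π : Equiv.Perm V, tf Γ x π := by
    rw [Matrix.det_apply']
    refine Finset.sum_congr rfl fun π _ => ?_
    rw [hplus π]
    unfold tf
    ring
  have e2 : (x • (1 : Matrix V V ℝ) - Γ.adjMatrix).det
      = ∑ π : Equiv.Perm V, (-1 : ℝ) ^ π.support.card * tf Γ x π := by
    rw [Matrix.det_apply']
    refine Finset.sum_congr rfl fun π _ => ?_
    rw [hminus π]
    unfold tf
    ring
  rw [e1, e2, ← sub_eq_zero, ← Finset.sum_sub_distrib]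
  rw [← Finset.sum_filter_add_sum_filter_not Finset.univ
    (fun π : Equiv.Perm V => Odd π.support.card)]
  have heven_part : ∑ π ∈ Finset.univ.filter
      (fun π : Equiv.Perm V => ¬ Odd π.support.card),
      (tf Γ x π - (-1 : ℝ) ^ π.support.card * tf Γ x π) = 0 := by
    apply Finset.sum_eq_zero
    intro π hπ
    have heven : Even π.support.card :=
      Nat.not_odd_iff_even.mp (Finset.mem_filter.mp hπ).2
    rw [heven.neg_one_pow]
    ring
  have hodd_part : ∑ π ∈ Finset.univ.filter
      (fun π : Equiv.Perm V => Odd π.support.card),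
      (tf Γ x π - (-1 : ℝ) ^ π.support.card * tf Γ x π)
      = ∑ π ∈ Finset.univ.filter (fun π : Equiv.Perm V => Odd π.support.card),
          2 * tf Γ x π := by
    refine Finset.sum_congr rfl fun π hπ => ?_
    rw [Odd.neg_one_pow (Finset.mem_filter.mp hπ).2]
    ring
  rw [heven_part, add_zero, hodd_part, ← Finset.mul_sum, sum_odd_zero Γ φ hφ x, mul_zero]

end MainSum

lemma eval_charpoly_smul {W : Type*} [Fintype W] [DecidableEq W] (M : Matrix W W ℝ) (x : ℝ) :
    M.charpoly.eval x = (x • (1 : Matrix W W ℝ) - M).det := by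
  show (Matrix.charmatrix M).det.eval x = _
  rw [← Polynomial.coe_evalRingHom, RingHom.map_det]
  congr 1
  ext i j
  by_cases hij : i = j
  · subst hij
    simp [Matrix.charmatrix_apply_eq, Matrix.map_apply, Matrix.sub_apply, Matrix.smul_apply,
      Matrix.one_apply_eq]
  · simp [Matrix.charmatrix_apply_ne _ _ _ hij, Matrix.map_apply, Matrix.sub_apply,
      Matrix.smul_apply, Matrix.one_apply_ne hij]

lemma comp_neg_comp_neg (p : ℝ[X]) : (p.comp (-X)).comp (-X) = p := by
  rw [Polynomial.comp_assoc]
  simp [Polynomial.neg_comp, Polynomial.X_comp]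

lemma comp_neg_ne_zero {p : ℝ[X]} (hp : p ≠ 0) : p.comp (-X) ≠ 0 := by
  intro h0
  apply hp
  rw [← comp_neg_comp_neg p, h0, Polynomial.zero_comp]

lemma rootMultiplicity_comp_neg_le (p : ℝ[X]) (hp : p ≠ 0) (a : ℝ) :
    p.rootMultiplicity (-a) ≤ (p.comp (-X)).rootMultiplicity a := by
  rw [Polynomial.le_rootMultiplicity_iff (comp_neg_ne_zero hp)]
  obtain ⟨r, hr⟩ := Polynomial.pow_rootMultiplicity_dvd p (-a)
  refine ⟨(-1) ^ p.rootMultiplicity (-a) * r.comp (-X), ?_⟩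
  conv_lhs => rw [hr]
  simp only [Polynomial.mul_comp, Polynomial.pow_comp, Polynomial.sub_comp, Polynomial.X_comp,
    Polynomial.C_comp, Polynomial.C_neg, Polynomial.neg_comp]
  rw [show (-X - -(Polynomial.C a) : ℝ[X]) = (-1) * (X - Polynomial.C a) by ring, mul_pow]
  ring

lemma rootMultiplicity_comp_neg (p : ℝ[X]) (a : ℝ) :
    (p.comp (-X)).rootMultiplicity a = p.rootMultiplicity (-a) := by
  by_cases hp : p = 0
  · subst hp
    simp [Polynomial.zero_comp]
  · apply le_antisymm
    · have h1 := rootMultiplicity_comp_neg_le (p.comp (-X)) (comp_neg_ne_zero hp) (-a)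
      rw [neg_neg, comp_neg_comp_neg] at h1
      exact h1
    · exact rootMultiplicity_comp_neg_le p hp a

theorem oddExchangeable_symmetricSpectrum [Fintype V] [DecidableEq V]
    (Γ : SignedGraph V) (h : Γ.OddExchangeable) : Γ.SymmetricSpectrum := by
  intro x
  have hdet := det_add_eq_det_sub Γ h
  set p := Γ.adjMatrix.charpoly with hp
  have hp0 : p ≠ 0 := (Γ.adjMatrix.charpoly_monic).ne_zero
  have heval : ∀ y : ℝ,
      p.eval y = (-1 : ℝ) ^ Fintype.card V * p.eval (-y) := by
    intro y
    rw [hp, eval_charpoly_smul, eval_charpoly_smul, ← hdet y]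
    have hM : (y • (1 : Matrix V V ℝ) + Γ.adjMatrix)
        = (-1 : ℝ) • ((-y) • (1 : Matrix V V ℝ) - Γ.adjMatrix) := by
      ext i j
      simp only [Matrix.add_apply, Matrix.smul_apply, Matrix.sub_apply, smul_eq_mul]
      ring
    rw [hM, Matrix.det_smul]
  have hq : p.comp (-X) = Polynomial.C ((-1 : ℝ) ^ Fintype.card V) * p := by
    apply Polynomial.funext
    intro y
    rw [Polynomial.eval_comp]
    simp only [Polynomial.eval_neg, Polynomial.eval_X, Polynomial.eval_mul, Polynomial.eval_C]
    have h2 := heval (-y)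
    rwa [neg_neg] at h2
  have hC0 : Polynomial.C ((-1 : ℝ) ^ Fintype.card V) * p ≠ 0 := by
    apply mul_ne_zero _ hp0
    rw [Ne, Polynomial.C_eq_zero]
    exact pow_ne_zero _ (by norm_num)
  rw [show p.rootMultiplicity (-x) = (p.comp (-X)).rootMultiplicity x from
    (rootMultiplicity_comp_neg p x).symm, hq,
    Polynomial.rootMultiplicity_mul hC0, Polynomial.rootMultiplicity_C, zero_add]

end SignedGraph
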